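/- For every nonnegative integer n, the identity \sum_{i=0}^{\lfloor n/2 \rfloor} \frac{1}{i+1} \binom{2i}{i} \binom{n}{2i} x^i (1+x)^{n-2i} = \sum_{i=0}^{n} \frac{1}{n+1} \binom{n+1}{i} \binom{n+1}{i+1} x^i holds as an identity of polynomials. -/

import Mathlib

open Polynomial Finset

-- trinomial revision chain: termwise identity for the Narayana sum
lemma term_eq (n k i : ℕ) (hik : i ≤ k) (hkn : k ≤ n) :
    (n+1).choose (i+1) * (k.choose i * (n-i).choose k)
      = (n+1).choose (k+1) * ((n-k).choose i * (k+1).choose (i+1)) := by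
  by_cases h : k + i ≤ n
  · have e1 : (n+1).choose (i+1) * (n-i).choose k
        = (n+1).choose (k+i+1) * (k+i+1).choose (i+1) := by
      have := Nat.choose_mul (n := n+1) (k := k+i+1) (s := i+1) (by omega)
      simpa [show n+1-(i+1) = n-i from by omega, show k+i+1-(i+1) = k from by omega] using
        this.symm
    have e2 : (k+i+1).choose (i+1) * k.choose i
        = (k+i+1).choose (2*i+1) * (2*i+1).choose (i+1) := by
      have := Nat.choose_mul (n := k+i+1) (k := 2*i+1) (s := i+1) (by omega)
      simpa [show k+i+1-(i+1) = k from by omega, show 2*i+1-(i+1) = i from by omega] using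
        this.symm
    have e3 : (2*i+1).choose (i+1) = (2*i+1).choose i := by
      have := Nat.choose_symm (n := 2*i+1) (k := i+1) (by omega)
      simpa [show 2*i+1-(i+1) = i from by omega] using this.symm
    have e4 : (k+i+1).choose (2*i+1) * (2*i+1).choose i
        = (k+i+1).choose i * (k+1).choose (i+1) := by
      have := Nat.choose_mul (n := k+i+1) (k := 2*i+1) (s := i) (by omega)
      simpa [show k+i+1-i = k+1 from by omega, show 2*i+1-i = i+1 from by omega] using this
    have e5 : (k+i+1).choose i = (k+i+1).choose (k+1) := by
      have := Nat.choose_symm (n := k+i+1) (k := k+1) (by omega)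
      simpa [show k+i+1-(k+1) = i from by omega] using this
    have e6 : (n+1).choose (k+i+1) * (k+i+1).choose (k+1)
        = (n+1).choose (k+1) * (n-k).choose i := by
      have := Nat.choose_mul (n := n+1) (k := k+i+1) (s := k+1) (by omega)
      simpa [show n+1-(k+1) = n-k from by omega, show k+i+1-(k+1) = i from by omega] using this
    calc (n+1).choose (i+1) * (k.choose i * (n-i).choose k)
        = ((n+1).choose (i+1) * (n-i).choose k) * k.choose i := by ring
      _ = (n+1).choose (k+i+1) * ((k+i+1).choose (i+1) * k.choose i) := by rw [e1]; ring
      _ = (n+1).choose (k+i+1) * ((k+i+1).choose (2*i+1) * (2*i+1).choose (i+1)) := by rw [e2]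
      _ = (n+1).choose (k+i+1) * ((k+i+1).choose (2*i+1) * (2*i+1).choose i) := by rw [e3]
      _ = (n+1).choose (k+i+1) * ((k+i+1).choose i * (k+1).choose (i+1)) := by rw [e4]
      _ = ((n+1).choose (k+i+1) * (k+i+1).choose (k+1)) * (k+1).choose (i+1) := by
          rw [e5]; ring
      _ = (n+1).choose (k+1) * ((n-k).choose i * (k+1).choose (i+1)) := by rw [e6]; ring
  · have z1 : (n-i).choose k = 0 := Nat.choose_eq_zero_of_lt (by omega)
    have z2 : (n-k).choose i = 0 := Nat.choose_eq_zero_of_lt (by omega)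
    simp [z1, z2]

lemma key (n k : ℕ) (hkn : k ≤ n) :
    ∑ i ∈ range (k+1), (n+1).choose (i+1) * (k.choose i * (n-i).choose k)
      = (n+1).choose k * (n+1).choose (k+1) := by
  have h1 : ∑ i ∈ range (k+1), (n+1).choose (i+1) * (k.choose i * (n-i).choose k)
      = (n+1).choose (k+1) * ∑ i ∈ range (k+1), (n-k).choose i * (k+1).choose (i+1) := by
    rw [Finset.mul_sum]
    refine Finset.sum_congr rfl fun i hi => ?_
    exact term_eq n k i (by simpa using Nat.lt_succ_iff.mp (Finset.mem_range.mp hi)) hkn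
  have h2 : ∑ i ∈ range (k+1), (n-k).choose i * (k+1).choose (i+1) = (n+1).choose k := by
    have hv := Nat.add_choose_eq (n-k) (k+1) k
    rw [Finset.Nat.sum_antidiagonal_eq_sum_range_succ_mk] at hv
    rw [show n-k+(k+1) = n+1 from by omega] at hv
    rw [hv]
    refine Finset.sum_congr rfl fun i hi => ?_
    have hik : i ≤ k := by simpa using Nat.lt_succ_iff.mp (Finset.mem_range.mp hi)
    congr 1
    have := Nat.choose_symm (n := k+1) (k := i+1) (by omega)
    rw [show k+1-(i+1) = k-i from by omega] at this
    exact this.symm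
  rw [h1, h2]; ring

lemma TI (n k i : ℕ) (hik : i ≤ k) (hkn : k ≤ n) :
    (n+1) * ((2*i).choose i * (n.choose (2*i) * (n-2*i).choose (k-i)))
      = (i+1) * ((n+1).choose (i+1) * (k.choose i * (n-i).choose k)) := by
  have hs : (n+1) * n.choose i = (n+1).choose (i+1) * (i+1) := Nat.add_one_mul_choose_eq n i
  have main : (2*i).choose i * (n.choose (2*i) * (n-2*i).choose (k-i))
      = n.choose i * (k.choose i * (n-i).choose k) := by
    by_cases h2 : 2*i ≤ n
    · have f1 : n.choose (2*i) * (2*i).choose i = n.choose i * (n-i).choose i := by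
        have := Nat.choose_mul (n := n) (k := 2*i) (s := i) (by omega)
        simpa [show 2*i-i = i from by omega] using this
      by_cases h3 : k ≤ n - i
      · have f2 : (n-i).choose k * k.choose i = (n-i).choose i * (n-2*i).choose (k-i) := by
          have := Nat.choose_mul (n := n-i) (k := k) (s := i) hik
          simpa [show n-i-i = n-2*i from by omega] using this
        calc (2*i).choose i * (n.choose (2*i) * (n-2*i).choose (k-i))
            = (n.choose (2*i) * (2*i).choose i) * (n-2*i).choose (k-i) := by ring
          _ = n.choose i * ((n-i).choose i * (n-2*i).choose (k-i)) := by rw [f1]; ring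
          _ = n.choose i * ((n-i).choose k * k.choose i) := by rw [f2]
          _ = n.choose i * (k.choose i * (n-i).choose k) := by ring
      · have z1 : (n-2*i).choose (k-i) = 0 := Nat.choose_eq_zero_of_lt (by omega)
        have z2 : (n-i).choose k = 0 := Nat.choose_eq_zero_of_lt (by omega)
        simp [z1, z2]
    · have z1 : n.choose (2*i) = 0 := Nat.choose_eq_zero_of_lt (by omega)
      have z2 : (n-i).choose k = 0 := Nat.choose_eq_zero_of_lt (by omega)
      simp [z1, z2]
  calc (n+1) * ((2*i).choose i * (n.choose (2*i) * (n-2*i).choose (k-i)))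
      = (n+1) * (n.choose i * (k.choose i * (n-i).choose k)) := by rw [main]
    _ = ((n+1) * n.choose i) * (k.choose i * (n-i).choose k) := by ring
    _ = (i+1) * ((n+1).choose (i+1) * (k.choose i * (n-i).choose k)) := by rw [hs]; ring

lemma coeffR (n k : ℕ) (hkn : k ≤ n) :
    ∑ i ∈ range (k+1),
        (1/(i+1:ℝ)) * ((2*i).choose i) * (n.choose (2*i)) * ((n-2*i).choose (k-i))
      = (1/(n+1:ℝ)) * ((n+1).choose k) * ((n+1).choose (k+1)) := by
  have hn : (n+1:ℝ) ≠ 0 := by positivity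
  apply mul_left_cancel₀ hn
  have hL : (n+1:ℝ) * ∑ i ∈ range (k+1),
      (1/(i+1:ℝ)) * ((2*i).choose i) * (n.choose (2*i)) * ((n-2*i).choose (k-i))
      = ∑ i ∈ range (k+1),
        (((n+1).choose (i+1) * (k.choose i * (n-i).choose k) : ℕ) : ℝ) := by
    rw [Finset.mul_sum]
    refine Finset.sum_congr rfl fun i hi => ?_
    have hik : i ≤ k := Nat.lt_succ_iff.mp (Finset.mem_range.mp hi)
    have hti := TI n k i hik hkn
    have hi1 : (i+1:ℝ) ≠ 0 := by positivity
    have hti' : (n+1:ℝ) * (((2*i).choose i : ℝ) * ((n.choose (2*i) : ℝ) *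
        (((n-2*i).choose (k-i) : ℝ))))
        = (i+1:ℝ) * (((n+1).choose (i+1) : ℝ) * ((k.choose i : ℝ) * ((n-i).choose k : ℝ))) := by
      exact_mod_cast congrArg (Nat.cast (R := ℝ)) hti
    push_cast
    field_simp
    linear_combination hti'
  rw [hL]
  rw [← Nat.cast_sum]
  rw [key n k hkn]
  push_cast
  field_simp


theorem stmt_13 (n : ℕ) :
    (∑ i ∈ Finset.range (n / 2 + 1),
        C ((1 / (i + 1 : ℝ)) * ((2 * i).choose i) * (n.choose (2 * i))) * X ^ i *
          (1 + X) ^ (n - 2 * i)) =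
      ∑ i ∈ Finset.range (n + 1),
        C ((1 / (n + 1 : ℝ)) * ((n + 1).choose i) * ((n + 1).choose (i + 1))) *
          (X : Polynomial ℝ) ^ i := by
  ext k
  rw [Polynomial.finset_sum_coeff, Polynomial.finset_sum_coeff]
  have hterm : ∀ i : ℕ, (C ((1 / (i + 1 : ℝ)) * ((2 * i).choose i) * (n.choose (2 * i))) * X ^ i *
          (1 + X : Polynomial ℝ) ^ (n - 2 * i)).coeff k
      = (1 / (i + 1 : ℝ)) * ((2 * i).choose i) * (n.choose (2 * i)) *
          (if i ≤ k then (((n - 2*i).choose (k - i) : ℝ)) else 0) := by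
    intro i
    rw [mul_assoc, mul_comm ((X : Polynomial ℝ) ^ i), Polynomial.coeff_C_mul,
      Polynomial.coeff_mul_X_pow']
    simp [Polynomial.coeff_one_add_X_pow]
  have hterm2 : ∀ i, (C ((1 / (n + 1 : ℝ)) * ((n + 1).choose i) * ((n + 1).choose (i + 1))) *
        (X : Polynomial ℝ) ^ i).coeff k
      = if k = i then (1/(n+1:ℝ)) * ((n+1).choose i) * ((n+1).choose (i+1)) else 0 := by
    intro i
    rw [Polynomial.coeff_C_mul, Polynomial.coeff_X_pow]
    split_ifs <;> simp
  simp only [hterm, hterm2]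
  rw [Finset.sum_ite_eq (Finset.range (n+1)) k]
  by_cases hk : k ≤ n
  · rw [if_pos (Finset.mem_range.mpr (by omega))]
    have hF1 : (∑ i ∈ range (n/2+1), (1 / (i + 1 : ℝ)) * ((2 * i).choose i) * (n.choose (2 * i)) *
          (if i ≤ k then (((n - 2*i).choose (k - i) : ℝ)) else 0))
        = ∑ i ∈ range (n+1), (1 / (i + 1 : ℝ)) * ((2 * i).choose i) * (n.choose (2 * i)) *
          (if i ≤ k then (((n - 2*i).choose (k - i) : ℝ)) else 0) := by
      apply Finset.sum_subset (Finset.range_subset_range.mpr (by omega))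
      intro i hi1 hi2
      have : n.choose (2*i) = 0 := Nat.choose_eq_zero_of_lt (by
        simp only [Finset.mem_range] at hi1 hi2; omega)
      simp [this]
    have hF2 : (∑ i ∈ range (k+1), (1 / (i + 1 : ℝ)) * ((2 * i).choose i) * (n.choose (2 * i)) *
          (if i ≤ k then (((n - 2*i).choose (k - i) : ℝ)) else 0))
        = ∑ i ∈ range (n+1), (1 / (i + 1 : ℝ)) * ((2 * i).choose i) * (n.choose (2 * i)) *
          (if i ≤ k then (((n - 2*i).choose (k - i) : ℝ)) else 0) := by
      apply Finset.sum_subset (Finset.range_subset_range.mpr (by omega))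
      intro i hi1 hi2
      rw [if_neg (by simp only [Finset.mem_range] at hi2; omega), mul_zero]
    rw [hF1, ← hF2]
    rw [← coeffR n k hk]
    refine Finset.sum_congr rfl fun i hi => ?_
    rw [if_pos (Nat.lt_succ_iff.mp (Finset.mem_range.mp hi))]
  · rw [if_neg (by simp; omega)]
    apply Finset.sum_eq_zero
    intro i hi
    have hi' : i ≤ n/2 := Nat.lt_succ_iff.mp (Finset.mem_range.mp hi)
    have : (n - 2*i).choose (k - i) = 0 := Nat.choose_eq_zero_of_lt (by omega)
    rw [if_pos (by omega), this]
    simp
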